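/- Suppose F satisfies (F1)–(F2) and the estimator η_N satisfies (A1)–(A2). Let λ ∈ (0, 1/C₅) with C₅ := C₃ C₁ and C₃ := 1 + β/ν. Suppose u_N ∈ X_N and w_N ∈ X_N satisfy a(w_N; u_N, v) = a(w_N; w_N, v) − ⟨F(w_N), v⟩ for all v ∈ X_N and ‖u_N − w_N‖_X ≤ λ η_N(u_N). Then ‖u* − u_N‖_X ≤ C₆ η_N(u_N), where C₆ := λ C₃ + C₂(1 + λ C₅). -/

import Mathlib

set_option autoImplicit false

/-- A posteriori bound for the output of the adaptive algorithm on a single space: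
if `u_N` is one linearization step from `w_N` and `‖u_N − w_N‖ ≤ λ η_N(u_N)` with
`λ ∈ (0, 1/C₅)`, then `‖u* − u_N‖ ≤ C₆ η_N(u_N)` where `C₆ = λC₃ + C₂(1 + λC₅)`. -/
theorem stmt_15
    {X : Type*} [NormedAddCommGroup X] [InnerProductSpace ℝ X] [CompleteSpace X]
    (F : X → X →L[ℝ] ℝ) (L ν : ℝ) (hL : 0 < L) (hν : 0 < ν)
    (hF1 : ∀ u v w : X, |F u w - F v w| ≤ L * ‖u - v‖ * ‖w‖)
    (hF2 : ∀ u v : X, ν * ‖u - v‖ ^ 2 ≤ F u (u - v) - F v (u - v))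
    (ustar : X) (hustar : ∀ v : X, F ustar v = 0)
    (a : X → X →ₗ[ℝ] X →ₗ[ℝ] ℝ) (α β : ℝ) (hα : 0 < α) (hβ : 0 < β)
    (hcoer : ∀ u v : X, α * ‖v‖ ^ 2 ≤ a u v v)
    (hbdd : ∀ u v w : X, a u v w ≤ β * ‖v‖ * ‖w‖)
    (XN : Submodule ℝ X) (hXNclosed : IsClosed (XN : Set X))
    (ustarN : X) (hustarN_mem : ustarN ∈ XN) (hustarN : ∀ v ∈ XN, F ustarN v = 0)
    (η : X → ℝ) (C₁ C₂ : ℝ) (hC₁ : 1 ≤ C₁) (hC₂ : 1 ≤ C₂)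
    (hηnonneg : ∀ v ∈ XN, 0 ≤ η v)
    (hA1 : ∀ v ∈ XN, ∀ w ∈ XN, |η v - η w| ≤ C₁ * ‖v - w‖)
    (hA2 : ‖ustar - ustarN‖ ≤ C₂ * η ustarN)
    (lam : ℝ) (hlam : 0 < lam)
    (C₃ C₅ C₆ : ℝ) (hC₃ : C₃ = 1 + β / ν) (hC₅ : C₅ = C₃ * C₁)
    (hC₆ : C₆ = lam * C₃ + C₂ * (1 + lam * C₅))
    (hlam' : lam < 1 / C₅)
    (wN uN : X) (hwmem : wN ∈ XN) (humem : uN ∈ XN)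
    (hstep : ∀ v ∈ XN, a wN uN v = a wN wN v - F wN v)
    (hstop : ‖uN - wN‖ ≤ lam * η uN) :
    ‖ustar - uN‖ ≤ C₆ * η uN := by

  have hd_mem : ustarN - wN ∈ XN := XN.sub_mem hustarN_mem hwmem
  set d := ustarN - wN with hdd
  -- F wN d = -(a wN (uN - wN) d)
  have hFwNd : (F wN) d = -(a wN (uN - wN) d) := by
    have h := hstep d hd_mem
    have : a wN (uN - wN) d = a wN uN d - a wN wN d := by
      simp [map_sub]
    linarith
  -- strong monotonicity chain
  have hmono : ν * ‖d‖ ^ 2 ≤ (F ustarN) d - (F wN) d := hF2 ustarN wN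
  have hF0 : (F ustarN) d = 0 := hustarN d hd_mem
  have hkey : ν * ‖d‖ ^ 2 ≤ a wN (uN - wN) d := by
    rw [hF0] at hmono; rw [hFwNd] at hmono; linarith
  have hbd : a wN (uN - wN) d ≤ β * ‖uN - wN‖ * ‖d‖ := hbdd wN (uN - wN) d
  have hdnn : (0:ℝ) ≤ ‖d‖ := norm_nonneg _
  have htnn : (0:ℝ) ≤ ‖uN - wN‖ := norm_nonneg _
  have hdbound : ‖d‖ ≤ (β / ν) * ‖uN - wN‖ := by
    rcases eq_or_lt_of_le hdnn with h0 | h0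
    · rw [← h0]; positivity
    · have h1 : ν * ‖d‖ ≤ β * ‖uN - wN‖ := by
        have h2 := hkey.trans hbd
        have h3 : ν * ‖d‖ * ‖d‖ ≤ β * ‖uN - wN‖ * ‖d‖ := by
          have : ν * ‖d‖ ^ 2 = ν * ‖d‖ * ‖d‖ := by ring
          linarith [this ▸ h2]
        exact (mul_le_mul_iff_of_pos_right h0).mp h3
      rw [div_mul_eq_mul_div, le_div_iff₀ hν]
      linarith
  -- ‖ustarN - uN‖ ≤ C₃ * ‖uN - wN‖
  have hC₃' : ‖ustarN - uN‖ ≤ C₃ * ‖uN - wN‖ := by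
    have h1 : ‖ustarN - uN‖ ≤ ‖d‖ + ‖uN - wN‖ := by
      have : ustarN - uN = d - (uN - wN) := by rw [hdd]; abel
      rw [this]
      exact norm_sub_le _ _
    have he : (1 + β / ν) * ‖uN - wN‖ = ‖uN - wN‖ + (β / ν) * ‖uN - wN‖ := by ring
    rw [hC₃, he]; linarith
  have hηnn : 0 ≤ η uN := hηnonneg uN humem
  have hηstar : η ustarN ≤ (1 + lam * C₅) * η uN := by
    have h := hA1 ustarN hustarN_mem uN humem
    have h2 : η ustarN - η uN ≤ C₁ * ‖ustarN - uN‖ := (abs_le.mp h).2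
    have hC₁nn : (0:ℝ) ≤ C₁ := le_trans zero_le_one hC₁
    have h3 : C₁ * ‖ustarN - uN‖ ≤ C₁ * (C₃ * (lam * η uN)) := by
      apply mul_le_mul_of_nonneg_left _ hC₁nn
      exact hC₃'.trans (by
        have hC₃nn : 0 ≤ C₃ := by rw [hC₃]; positivity
        exact mul_le_mul_of_nonneg_left hstop hC₃nn)
    rw [hC₅]
    have he : (1 + lam * (C₃ * C₁)) * η uN = η uN + C₁ * (C₃ * (lam * η uN)) := by ring
    rw [he]; linarith
  have hfinal : ‖ustar - uN‖ ≤ ‖ustar - ustarN‖ + ‖ustarN - uN‖ := by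
    have : ustar - uN = (ustar - ustarN) + (ustarN - uN) := by abel
    rw [this]; exact norm_add_le _ _
  have hC₂nn : (0:ℝ) ≤ C₂ := le_trans zero_le_one hC₂
  have hC₃nn : 0 ≤ C₃ := by rw [hC₃]; positivity
  have h5 : ‖ustarN - uN‖ ≤ C₃ * (lam * η uN) :=
    hC₃'.trans (mul_le_mul_of_nonneg_left hstop hC₃nn)
  have h6 : ‖ustar - ustarN‖ ≤ C₂ * ((1 + lam * C₅) * η uN) :=
    hA2.trans (mul_le_mul_of_nonneg_left hηstar hC₂nn)
  rw [hC₆]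
  have he : (lam * C₃ + C₂ * (1 + lam * C₅)) * η uN
      = C₃ * (lam * η uN) + C₂ * ((1 + lam * C₅) * η uN) := by ring
  rw [he]; linarith
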